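/- Let T be a rank one bounded operator on a complex Hilbert space H that is not normal (T T* ≠ T* T) and has tr T ≠ 0. Then the semigroup S(T, T*) generated by T and T* is a selfadjoint-ideal (SI) semigroup if and only if exactly one of the following two conditions holds: (a) the trace-norm condition: there exist integers m, n ≥ 0 with m + n ≥ 1 and l ≥ 1 such that (tr T)^m · (conjugate of tr T)^n · ‖T‖^{2l} = 1; (b) tr T is real and ‖T‖ = 1. -/

import Mathlib

set_option linter.unusedSectionVars false
set_option maxHeartbeats 2000000


open ContinuousLinearMap
open scoped ComplexInnerProductSpace

variable {H : Type*} [NormedAddCommGroup H] [InnerProductSpace ℂ H] [CompleteSpace H]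

/-- `J` is a (two-sided) semigroup-ideal of `S`. -/
def IsSemigroupIdeal {M : Type*} [Mul M] (S J : Set M) : Prop :=
  J ⊆ S ∧ ∀ T ∈ J, ∀ X ∈ S, X * T ∈ J ∧ T * X ∈ J

/-- `S` is a selfadjoint-ideal (SI) semigroup: every semigroup-ideal of `S`
is closed under adjoints. -/
def IsSI (S : Set (H →L[ℂ] H)) : Prop :=
  ∀ J : Set (H →L[ℂ] H), IsSemigroupIdeal S J → ∀ T ∈ J, adjoint T ∈ J

/-- `S` is simple: every ideal of `S` containing a nonzero element equals `S`. -/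
def IsSimpleSemigroup {M : Type*} [Mul M] [Zero M] (S : Set M) : Prop :=
  ∀ J : Set M, IsSemigroupIdeal S J → (∃ T ∈ J, T ≠ 0) → J = S

/-- `S(T, T*)`: the semigroup generated by `T` and `T*`, i.e. all finite products
`A₁ ⋯ A_k` (`k ≥ 1`) with each `Aᵢ ∈ {T, T*}`. -/
noncomputable def genSG (T : H →L[ℂ] H) : Set (H →L[ℂ] H) :=
  (Subsemigroup.closure {T, adjoint T} : Subsemigroup (H →L[ℂ] H))


section Aux
variable {T A : H →L[ℂ] H} {e f : H}

private lemma relTT (hT : ∀ x, T x = ⟪e, x⟫ • f) : T * T = ⟪e, f⟫ • T := by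
  ext x
  simp only [mul_apply_eq_comp, hT, smul_apply, inner_smul_right, map_smul, smul_smul]
  congr 1; ring

private lemma relTAT (hT : ∀ x, T x = ⟪e, x⟫ • f) (hA : ∀ x, A x = ⟪f, x⟫ • e)
    (hf1 : ⟪f, f⟫ = (1:ℂ)) : T * A * T = ⟪e, e⟫ • T := by
  ext x
  simp only [mul_apply_eq_comp, hT, hA, smul_apply, inner_smul_right, map_smul, smul_smul, hf1]
  congr 1; ring

private lemma relATA (hT : ∀ x, T x = ⟪e, x⟫ • f) (hA : ∀ x, A x = ⟪f, x⟫ • e)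
    (hf1 : ⟪f, f⟫ = (1:ℂ)) : A * T * A = ⟪e, e⟫ • A := by
  ext x
  simp only [mul_apply_eq_comp, hT, hA, smul_apply, inner_smul_right, map_smul, smul_smul, hf1]
  congr 1; ring

private lemma relAA (hA : ∀ x, A x = ⟪f, x⟫ • e) : A * A = ⟪f, e⟫ • A :=
  relTT (T := A) (e := f) (f := e) hA

-- derived table
variable (hT : ∀ x, T x = ⟪e, x⟫ • f) (hA : ∀ x, A x = ⟪f, x⟫ • e) (hf1 : ⟪f, f⟫ = (1:ℂ))
include hT hA hf1

private lemma tTP : T*(T*A) = ⟪e,f⟫•(T*A) := by rw [← mul_assoc, relTT hT, smul_mul_assoc]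
private lemma tTQ : T*(A*T) = ⟪e,e⟫•T := by rw [← mul_assoc, relTAT hT hA hf1]
private lemma tAP : A*(T*A) = ⟪e,e⟫•A := by rw [← mul_assoc, relATA hT hA hf1]
private lemma tAQ : A*(A*T) = ⟪f,e⟫•(A*T) := by rw [← mul_assoc, relAA hA, smul_mul_assoc]
private lemma tPA : (T*A)*A = ⟪f,e⟫•(T*A) := by rw [mul_assoc, relAA hA, mul_smul_comm]
private lemma tPP : (T*A)*(T*A) = ⟪e,e⟫•(T*A) := by
  rw [← mul_assoc, relTAT hT hA hf1, smul_mul_assoc]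
private lemma tPQ : (T*A)*(A*T) = (⟪f,e⟫*⟪e,e⟫)•T := by
  rw [← mul_assoc, tPA hT hA hf1, smul_mul_assoc, relTAT hT hA hf1, smul_smul]
private lemma tQT : (A*T)*T = ⟪e,f⟫•(A*T) := by rw [mul_assoc, relTT hT, mul_smul_comm]
private lemma tQP : (A*T)*(T*A) = (⟪e,f⟫*⟪e,e⟫)•A := by
  rw [← mul_assoc, tQT hT hA hf1, smul_mul_assoc, relATA hT hA hf1, smul_smul]
private lemma tQQ : (A*T)*(A*T) = ⟪e,e⟫•(A*T) := by
  rw [← mul_assoc, relATA hT hA hf1, smul_mul_assoc]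

end Aux

section Mem
variable {T A : H →L[ℂ] H} {e f : H}

private lemma genSG_T : T ∈ genSG T := Subsemigroup.subset_closure (Set.mem_insert _ _)

private lemma genSG_mul {X Y : H →L[ℂ] H} (hX : X ∈ genSG T) (hY : Y ∈ genSG T) :
    X * Y ∈ genSG T := Subsemigroup.mul_mem _ hX hY

variable (hT : ∀ x, T x = ⟪e, x⟫ • f) (hA : ∀ x, A x = ⟪f, x⟫ • e) (hf1 : ⟪f, f⟫ = (1:ℂ))
  (hadj : adjoint T = A)
include hT hA hf1 hadj

private lemma genSG_A : A ∈ genSG T :=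
  hadj ▸ Subsemigroup.subset_closure (Set.mem_insert_of_mem _ rfl)

private lemma memL1 : ∀ m : ℕ, (⟪e,f⟫^m)•T ∈ genSG T := by
  intro m
  induction m with
  | zero => simpa using genSG_T
  | succ m ih =>
      have h2 : (⟪e,f⟫^(m+1))•T = ((⟪e,f⟫^m)•T)*T := by
        rw [smul_mul_assoc, relTT hT, smul_smul, pow_succ]
      rw [h2]; exact genSG_mul ih genSG_T

private lemma memL2 : ∀ n : ℕ, (⟪f,e⟫^n)•A ∈ genSG T := by
  intro n
  induction n with
  | zero => simpa using genSG_A hT hA hf1 hadj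
  | succ n ih =>
      have h2 : (⟪f,e⟫^(n+1))•A = ((⟪f,e⟫^n)•A)*A := by
        rw [smul_mul_assoc, relAA hA, smul_smul, pow_succ]
      rw [h2]; exact genSG_mul ih (genSG_A hT hA hf1 hadj)

private lemma memL3 : ∀ m n l : ℕ, (⟪e,f⟫^m*⟪f,e⟫^n*⟪e,e⟫^(l+1))•T ∈ genSG T := by
  intro m n l
  induction l with
  | zero =>
      have h2 : (⟪e,f⟫^m*⟪f,e⟫^n*⟪e,e⟫^(0+1))•T = (((⟪e,f⟫^m)•T)*((⟪f,e⟫^n)•A))*T := by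
        rw [smul_mul_assoc, mul_smul_comm, smul_smul, smul_mul_assoc, relTAT hT hA hf1,
          smul_smul]
        congr 1; ring
      rw [h2]
      exact genSG_mul (genSG_mul (memL1 hT hA hf1 hadj m) (memL2 hT hA hf1 hadj n)) genSG_T
  | succ l ih =>
      have h2 : (⟪e,f⟫^m*⟪f,e⟫^n*⟪e,e⟫^(l+1+1))•T
          = (((⟪e,f⟫^m*⟪f,e⟫^n*⟪e,e⟫^(l+1))•T)*A)*T := by
        rw [smul_mul_assoc, smul_mul_assoc, relTAT hT hA hf1, smul_smul]
        congr 1; ring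
      rw [h2]; exact genSG_mul (genSG_mul ih (genSG_A hT hA hf1 hadj)) genSG_T

private lemma memL4 : ∀ m n l : ℕ, (⟪e,f⟫^m*⟪f,e⟫^n*⟪e,e⟫^(l+1))•A ∈ genSG T := by
  intro m n l
  induction l with
  | zero =>
      have h2 : (⟪e,f⟫^m*⟪f,e⟫^n*⟪e,e⟫^(0+1))•A = (((⟪f,e⟫^n)•A)*((⟪e,f⟫^m)•T))*A := by
        rw [smul_mul_assoc, mul_smul_comm, smul_smul, smul_mul_assoc, relATA hT hA hf1,
          smul_smul]
        congr 1; ring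
      rw [h2]
      exact genSG_mul (genSG_mul (memL2 hT hA hf1 hadj n) (memL1 hT hA hf1 hadj m))
        (genSG_A hT hA hf1 hadj)
  | succ l ih =>
      have h2 : (⟪e,f⟫^m*⟪f,e⟫^n*⟪e,e⟫^(l+1+1))•A
          = (((⟪e,f⟫^m*⟪f,e⟫^n*⟪e,e⟫^(l+1))•A)*T)*A := by
        rw [smul_mul_assoc, smul_mul_assoc, relATA hT hA hf1, smul_smul]
        congr 1; ring
      rw [h2]; exact genSG_mul (genSG_mul ih genSG_T) (genSG_A hT hA hf1 hadj)

private lemma memL5 : ∀ m n l : ℕ, (⟪e,f⟫^m*⟪f,e⟫^n*⟪e,e⟫^l)•(T*A) ∈ genSG T := by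
  intro m n l
  cases l with
  | zero =>
      have h2 : (⟪e,f⟫^m*⟪f,e⟫^n*⟪e,e⟫^0)•(T*A) = ((⟪e,f⟫^m)•T)*((⟪f,e⟫^n)•A) := by
        rw [smul_mul_assoc, mul_smul_comm, smul_smul]
        congr 1; ring
      rw [h2]; exact genSG_mul (memL1 hT hA hf1 hadj m) (memL2 hT hA hf1 hadj n)
  | succ l =>
      have h2 : (⟪e,f⟫^m*⟪f,e⟫^n*⟪e,e⟫^(l+1))•(T*A)
          = ((⟪e,f⟫^m*⟪f,e⟫^n*⟪e,e⟫^(l+1))•T)*A := by rw [smul_mul_assoc]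
      rw [h2]; exact genSG_mul (memL3 hT hA hf1 hadj m n l) (genSG_A hT hA hf1 hadj)

private lemma memL6 : ∀ m n l : ℕ, (⟪e,f⟫^m*⟪f,e⟫^n*⟪e,e⟫^l)•(A*T) ∈ genSG T := by
  intro m n l
  cases l with
  | zero =>
      have h2 : (⟪e,f⟫^m*⟪f,e⟫^n*⟪e,e⟫^0)•(A*T) = ((⟪f,e⟫^n)•A)*((⟪e,f⟫^m)•T) := by
        rw [smul_mul_assoc, mul_smul_comm, smul_smul]
        congr 1; ring
      rw [h2]; exact genSG_mul (memL2 hT hA hf1 hadj n) (memL1 hT hA hf1 hadj m)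
  | succ l =>
      have h2 : (⟪e,f⟫^m*⟪f,e⟫^n*⟪e,e⟫^(l+1))•(A*T)
          = ((⟪e,f⟫^m*⟪f,e⟫^n*⟪e,e⟫^(l+1))•A)*T := by rw [smul_mul_assoc]
      rw [h2]; exact genSG_mul (memL4 hT hA hf1 hadj m n l) genSG_T

end Mem

section Struct
variable {T A : H →L[ℂ] H} {e f : H}

private lemma keyLR (u v w : ℂ) (B B' B'' : H →L[ℂ] H) (h : B * B' = w • B'') :
    (u•B)*(v•B') = (u*v*w)•B'' := by
  rw [smul_mul_assoc, mul_smul_comm, h, smul_smul, smul_smul, mul_assoc]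

variable (hT : ∀ x, T x = ⟪e, x⟫ • f) (hA : ∀ x, A x = ⟪f, x⟫ • e) (hf1 : ⟪f, f⟫ = (1:ℂ))
  (hadj : adjoint T = A)
include hT hA hf1 hadj

private lemma structure_lemma : ∀ W ∈ genSG T, ∃ a b c : ℕ,
    W = (⟪e,f⟫^a*⟪f,e⟫^b*⟪e,e⟫^c)•T ∨ W = (⟪e,f⟫^a*⟪f,e⟫^b*⟪e,e⟫^c)•A
    ∨ W = (⟪e,f⟫^a*⟪f,e⟫^b*⟪e,e⟫^c)•(T*A) ∨ W = (⟪e,f⟫^a*⟪f,e⟫^b*⟪e,e⟫^c)•(A*T) := by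
  intro W hW
  refine Subsemigroup.closure_induction
    (p := fun W _ => ∃ a b c : ℕ,
      W = (⟪e,f⟫^a*⟪f,e⟫^b*⟪e,e⟫^c)•T ∨ W = (⟪e,f⟫^a*⟪f,e⟫^b*⟪e,e⟫^c)•A
      ∨ W = (⟪e,f⟫^a*⟪f,e⟫^b*⟪e,e⟫^c)•(T*A) ∨ W = (⟪e,f⟫^a*⟪f,e⟫^b*⟪e,e⟫^c)•(A*T))
    ?_ ?_ hW
  · intro x hx
    rcases hx with hx | hx
    · exact ⟨0, 0, 0, Or.inl (by rw [hx]; simp)⟩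
    · refine ⟨0, 0, 0, Or.inr (Or.inl ?_)⟩
      rw [Set.mem_singleton_iff.1 hx, hadj]; simp
  · rintro x y _ _ ⟨a, b, c, hx1⟩ ⟨a', b', c', hy1⟩
    rcases hx1 with hx1|hx1|hx1|hx1 <;> rcases hy1 with hy1|hy1|hy1|hy1 <;> rw [hx1, hy1]
    · exact ⟨a+a'+1, b+b', c+c', Or.inl
        (by rw [keyLR _ _ _ _ _ _ (relTT hT)]; congr 1; ring)⟩
    · exact ⟨a+a', b+b', c+c', Or.inr (Or.inr (Or.inl
        (by rw [keyLR _ _ _ _ _ _ (one_smul ℂ (T*A)).symm]; congr 1; ring)))⟩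
    · exact ⟨a+a'+1, b+b', c+c', Or.inr (Or.inr (Or.inl
        (by rw [keyLR _ _ _ _ _ _ (tTP hT hA hf1)]; congr 1; ring)))⟩
    · exact ⟨a+a', b+b', c+c'+1, Or.inl
        (by rw [keyLR _ _ _ _ _ _ (tTQ hT hA hf1)]; congr 1; ring)⟩
    · exact ⟨a+a', b+b', c+c', Or.inr (Or.inr (Or.inr
        (by rw [keyLR _ _ _ _ _ _ (one_smul ℂ (A*T)).symm]; congr 1; ring)))⟩
    · exact ⟨a+a', b+b'+1, c+c', Or.inr (Or.inl
        (by rw [keyLR _ _ _ _ _ _ (relAA hA)]; congr 1; ring))⟩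
    · exact ⟨a+a', b+b', c+c'+1, Or.inr (Or.inl
        (by rw [keyLR _ _ _ _ _ _ (tAP hT hA hf1)]; congr 1; ring))⟩
    · exact ⟨a+a', b+b'+1, c+c', Or.inr (Or.inr (Or.inr
        (by rw [keyLR _ _ _ _ _ _ (tAQ hT hA hf1)]; congr 1; ring)))⟩
    · exact ⟨a+a', b+b', c+c'+1, Or.inl
        (by rw [keyLR _ _ _ _ _ _ (relTAT hT hA hf1)]; congr 1; ring)⟩
    · exact ⟨a+a', b+b'+1, c+c', Or.inr (Or.inr (Or.inl
        (by rw [keyLR _ _ _ _ _ _ (tPA hT hA hf1)]; congr 1; ring)))⟩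
    · exact ⟨a+a', b+b', c+c'+1, Or.inr (Or.inr (Or.inl
        (by rw [keyLR _ _ _ _ _ _ (tPP hT hA hf1)]; congr 1; ring)))⟩
    · exact ⟨a+a', b+b'+1, c+c'+1, Or.inl
        (by rw [keyLR _ _ _ _ _ _ (tPQ hT hA hf1)]; congr 1; ring)⟩
    · exact ⟨a+a'+1, b+b', c+c', Or.inr (Or.inr (Or.inr
        (by rw [keyLR _ _ _ _ _ _ (tQT hT hA hf1)]; congr 1; ring)))⟩
    · exact ⟨a+a', b+b', c+c'+1, Or.inr (Or.inl
        (by rw [keyLR _ _ _ _ _ _ (relATA hT hA hf1)]; congr 1; ring))⟩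
    · exact ⟨a+a'+1, b+b', c+c'+1, Or.inr (Or.inl
        (by rw [keyLR _ _ _ _ _ _ (tQP hT hA hf1)]; congr 1; ring))⟩
    · exact ⟨a+a', b+b', c+c'+1, Or.inr (Or.inr (Or.inr
        (by rw [keyLR _ _ _ _ _ _ (tQQ hT hA hf1)]; congr 1; ring)))⟩

end Struct

section Misc
variable {T A : H →L[ℂ] H} {e f : H}

private lemma aux_smul_cancel {c d : ℂ} {v : H} (hv : v ≠ 0) (h : c • v = d • v) : c = d := by
  by_contra hne
  have h2 : (c - d) • v = 0 := by rw [sub_smul, h, sub_self]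
  rcases smul_eq_zero.1 h2 with h3 | h3
  · exact hne (sub_eq_zero.1 h3)
  · exact hv h3

private lemma pow_eq_one_nonneg {x : ℝ} (hx : 0 ≤ x) {k : ℕ} (hk : k ≠ 0) (h : x^k = 1) :
    x = 1 := by
  rcases lt_trichotomy x 1 with h1 | h1 | h1
  · have := pow_lt_one₀ hx h1 hk; linarith
  · exact h1
  · have := one_lt_pow₀ h1 hk; linarith

variable (hT : ∀ x, T x = ⟪e, x⟫ • f) (hA : ∀ x, A x = ⟪f, x⟫ • e) (hf1 : ⟪f, f⟫ = (1:ℂ))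
  (he0 : e ≠ 0) (hf0 : f ≠ 0) (hns : ∀ c : ℂ, e ≠ c • f)

include hT hA hf1 in
private lemma nspan (hadj : adjoint T = A) (hnn : T * adjoint T ≠ adjoint T * T) :
    ∀ c : ℂ, e ≠ c • f := by
  intro c hc
  apply hnn
  rw [hadj]
  ext x
  simp only [mul_apply_eq_comp, hT, hA, hc, inner_smul_left, inner_smul_right, map_smul, smul_smul, hf1,
    mul_one, one_mul]
  congr 1; ring

include hT hA hf1 hns in
private lemma exclT : ∀ w : ℂ, A ≠ w • T := by
  intro w h
  apply hns (w * ⟪e,f⟫)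
  have h1 : A f = (w•T) f := congrArg (fun X : H →L[ℂ] H => X f) h
  rw [hA, hf1, one_smul, smul_apply, hT, smul_smul] at h1
  exact h1

include hT hA hf1 hns in
private lemma exclP : ∀ w : ℂ, A ≠ w • (T*A) := by
  intro w h
  apply hns (w * ⟪e,e⟫)
  have h1 : A f = (w•(T*A)) f := congrArg (fun X : H →L[ℂ] H => X f) h
  rw [hA, hf1, one_smul, smul_apply, mul_apply_eq_comp, hA, hf1, one_smul, hT, smul_smul] at h1
  exact h1

include hT hA hf1 he0 hf0 hns in
private lemma exclQ : ∀ w : ℂ, A ≠ w • (A*T) := by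
  intro w h
  have h1 : ∀ x, ⟪f,x⟫ = w * ⟪e,x⟫ := by
    intro x
    have h2 : A x = (w•(A*T)) x := congrArg (fun X : H →L[ℂ] H => X x) h
    rw [hA, smul_apply, mul_apply_eq_comp, hT, map_smul, hA, hf1, one_smul, smul_smul] at h2
    exact aux_smul_cancel he0 h2
  have hfe : f = (starRingEnd ℂ w) • e := by
    refine ext_inner_right ℂ fun v => ?_
    rw [inner_smul_left, RCLike.conj_conj]
    exact h1 v
  have hw : w ≠ 0 := by
    intro hw0
    rw [hw0, map_zero, zero_smul] at hfe
    exact hf0 hfe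
  have hcw : (starRingEnd ℂ) w ≠ 0 := by
    rw [starRingEnd_apply]; exact star_ne_zero.2 hw
  exact hns ((starRingEnd ℂ w)⁻¹) (by rw [hfe, inv_smul_smul₀ hcw])

include hT in
private lemma normT (hf : ‖f‖ = 1) : ‖T‖ = ‖e‖ := by
  apply le_antisymm
  · refine opNorm_le_bound _ (norm_nonneg e) fun x => ?_
    rw [hT, norm_smul, hf, mul_one]
    exact norm_inner_le_norm e x
  · rcases eq_or_ne e 0 with he | he
    · simp [he]
    · have h1 : ‖T e‖ ≤ ‖T‖ * ‖e‖ := le_opNorm T e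
      rw [hT, norm_smul, hf, mul_one] at h1
      have h2 : ‖(⟪e,e⟫:ℂ)‖ = ‖e‖^2 := by
        rw [inner_self_eq_norm_sq_to_K]
        rw [norm_pow, RCLike.norm_ofReal, abs_of_nonneg (norm_nonneg e)]
      rw [h2] at h1
      have h3 : 0 < ‖e‖ := norm_pos_iff.2 he
      nlinarith

include he0 hf0 hns in
private lemma rho_lt (hf : ‖f‖ = 1) : ‖(⟪e,f⟫:ℂ)‖ < ‖e‖ := by
  have h1 : ‖(⟪e,f⟫:ℂ)‖ ≤ ‖e‖ * ‖f‖ := norm_inner_le_norm e f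
  rw [hf, mul_one] at h1
  rcases lt_or_eq_of_le h1 with h | h
  · exact h
  · exfalso
    obtain ⟨r, hr0, hr⟩ := (norm_inner_eq_norm_iff he0 hf0).1 (by rw [h, hf, mul_one])
    exact hns r⁻¹ (by rw [hr, inv_smul_smul₀ hr0])

end Misc


/-- for `T` rank one, non-normal, with `tr T ≠ 0`, the semigroup
`S(T, T*)` is SI iff exactly one of the following holds:
(a) the trace-norm condition `(tr T)^m · conj(tr T)^n · ‖T‖^(2l) = 1` for some
`m, n ≥ 0` with `m + n ≥ 1` and some `l ≥ 1`; or (b) `tr T` is real and `‖T‖ = 1`. -/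
theorem stmt12 (T : H →L[ℂ] H)
    (hnn : T * adjoint T ≠ adjoint T * T)
    (f : H) (hf : ‖f‖ = 1)
    (hrange : LinearMap.range (T : H →ₗ[ℂ] H) = Submodule.span ℂ {f})
    (htr : ⟪f, T f⟫ ≠ 0) :
    IsSI (genSG T) ↔
      Xor'
        (∃ m n l : ℕ, 1 ≤ m + n ∧ 1 ≤ l ∧
          ⟪f, T f⟫ ^ m * (starRingEnd ℂ) ⟪f, T f⟫ ^ n * (‖T‖ : ℂ) ^ (2 * l) = 1)
        ((starRingEnd ℂ) ⟪f, T f⟫ = ⟪f, T f⟫ ∧ ‖T‖ = 1) := by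
  have hf0 : f ≠ 0 := fun h => by rw [h, norm_zero] at hf; exact one_ne_zero hf.symm
  have hf1 : ⟪f, f⟫ = (1:ℂ) := by
    have := inner_self_eq_norm_sq_to_K (𝕜 := ℂ) f
    rw [hf] at this; simpa using this
  set A := adjoint T with hA_def
  set e := A f with he_def
  have hadj : adjoint T = A := rfl
  have hT : ∀ x, T x = ⟪e, x⟫ • f := by
    intro x
    have h1 : T x ∈ Submodule.span ℂ {f} := by
      rw [← hrange]; exact LinearMap.mem_range_self _ x
    obtain ⟨cc, hc⟩ := Submodule.mem_span_singleton.1 h1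
    have h2 : ⟪f, T x⟫ = cc := by rw [← hc, inner_smul_right, hf1, mul_one]
    have h3 : ⟪e, x⟫ = ⟪f, T x⟫ := adjoint_inner_left T x f
    rw [← hc, h3, h2]
  have hA : ∀ x, A x = ⟪f, x⟫ • e := by
    intro x
    refine ext_inner_left ℂ fun v => ?_
    rw [hA_def, adjoint_inner_right, hT v, inner_smul_left, inner_smul_right, inner_conj_symm]
    ring
  have hτ : ⟪f, T f⟫ = ⟪e, f⟫ := by rw [hT f, inner_smul_right, hf1, mul_one]
  have hσ0 : ⟪e, f⟫ ≠ (0:ℂ) := by rw [← hτ]; exact htr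
  have he0 : e ≠ 0 := by intro h; apply hσ0; rw [h, inner_zero_left]
  have hns : ∀ c : ℂ, e ≠ c • f := nspan hT hA hf1 hadj hnn
  have hnrm : ‖T‖ = ‖e‖ := normT hT hf
  have hρlt : ‖(⟪e,f⟫:ℂ)‖ < ‖e‖ := rho_lt he0 hf0 hns hf
  have hσ'c : (starRingEnd ℂ) ⟪e,f⟫ = ⟪f,e⟫ := inner_conj_symm f e
  have hσc : (starRingEnd ℂ) ⟪f,e⟫ = ⟪e,f⟫ := inner_conj_symm e f
  have hεc : (starRingEnd ℂ) ⟪e,e⟫ = ⟪e,e⟫ := inner_conj_symm e e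
  have hε : ((‖T‖:ℝ):ℂ)^2 = ⟪e,e⟫ := by
    rw [hnrm]; exact_mod_cast (inner_self_eq_norm_sq_to_K e).symm
  have hAf : A f = e := by rw [hA f, hf1, one_smul]
  have hnotboth : ¬((∃ m n l : ℕ, 1 ≤ m + n ∧ 1 ≤ l ∧
      ⟪f, T f⟫ ^ m * (starRingEnd ℂ) ⟪f, T f⟫ ^ n * (‖T‖ : ℂ) ^ (2 * l) = 1) ∧
      ((starRingEnd ℂ) ⟪f, T f⟫ = ⟪f, T f⟫ ∧ ‖T‖ = 1)) := by
    rintro ⟨⟨m, n, l, hmn, hl, heq⟩, _, hT1⟩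
    have hρ1 : ‖⟪f, T f⟫‖ < 1 := by
      rw [hτ]
      calc ‖(⟪e,f⟫:ℂ)‖ < ‖e‖ := hρlt
        _ = 1 := by rw [← hnrm, hT1]
    have h2 := congrArg (‖·‖) heq
    simp only [norm_mul, norm_pow, RCLike.norm_conj, hT1, Complex.ofReal_one, norm_one,
      one_pow, mul_one] at h2
    rw [← pow_add] at h2
    have h3 : ‖⟪f, T f⟫‖^(m+n) < 1 := pow_lt_one₀ (norm_nonneg _) hρ1 (by omega)
    rw [h2] at h3
    exact lt_irrefl 1 h3
  constructor
  · -- forward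
    intro hSI
    set J₁ : Set (H →L[ℂ] H) := {W | (∃ m : ℕ, W = (⟪e,f⟫^m)•T) ∨
      (∃ m n l : ℕ, W = (⟪e,f⟫^m*⟪f,e⟫^n*⟪e,e⟫^(l+1))•T) ∨
      (∃ m n l : ℕ, W = (⟪e,f⟫^m*⟪f,e⟫^n*⟪e,e⟫^(l+1))•A) ∨
      (∃ m n l : ℕ, W = (⟪e,f⟫^m*⟪f,e⟫^n*⟪e,e⟫^l)•(T*A)) ∨
      (∃ m n l : ℕ, W = (⟪e,f⟫^m*⟪f,e⟫^n*⟪e,e⟫^l)•(A*T))} with hJ₁_def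
    have hJ₁mem : ∀ W, W ∈ J₁ ↔ ((∃ m : ℕ, W = (⟪e,f⟫^m)•T) ∨
      (∃ m n l : ℕ, W = (⟪e,f⟫^m*⟪f,e⟫^n*⟪e,e⟫^(l+1))•T) ∨
      (∃ m n l : ℕ, W = (⟪e,f⟫^m*⟪f,e⟫^n*⟪e,e⟫^(l+1))•A) ∨
      (∃ m n l : ℕ, W = (⟪e,f⟫^m*⟪f,e⟫^n*⟪e,e⟫^l)•(T*A)) ∨
      (∃ m n l : ℕ, W = (⟪e,f⟫^m*⟪f,e⟫^n*⟪e,e⟫^l)•(A*T))) := by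
      intro W; rw [hJ₁_def]; exact Iff.rfl
    have hJsub : J₁ ⊆ genSG T := by
      intro W hW
      rcases (hJ₁mem W).1 hW with ⟨m, rfl⟩ | ⟨m, n, l, rfl⟩ | ⟨m, n, l, rfl⟩ |
        ⟨m, n, l, rfl⟩ | ⟨m, n, l, rfl⟩
      · exact memL1 hT hA hf1 hadj m
      · exact memL3 hT hA hf1 hadj m n l
      · exact memL4 hT hA hf1 hadj m n l
      · exact memL5 hT hA hf1 hadj m n l
      · exact memL6 hT hA hf1 hadj m n l
    have hstep : ∀ X ∈ genSG T, ∀ W ∈ J₁, X*W ∈ J₁ ∧ W*X ∈ J₁ := by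
      intro X hX
      refine Subsemigroup.closure_induction
        (p := fun X _ => ∀ W ∈ J₁, X*W ∈ J₁ ∧ W*X ∈ J₁) ?_ ?_ hX
      · intro x hx W hW
        rcases (hJ₁mem W).1 hW with ⟨m, rfl⟩ | ⟨m, n, l, rfl⟩ | ⟨m, n, l, rfl⟩ |
          ⟨m, n, l, rfl⟩ | ⟨m, n, l, rfl⟩ <;>
          (rw [Set.mem_insert_iff, Set.mem_singleton_iff] at hx;
           rcases hx with rfl | rfl) <;> rw [hJ₁mem, hJ₁mem]
        -- x = T cases (by W-form), then x = adjoint T cases, interleaved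
        · constructor
          · exact Or.inl ⟨m+1, by rw [mul_smul_comm, relTT hT, smul_smul]; try congr 1; try ring⟩
          · exact Or.inl ⟨m+1, by rw [smul_mul_assoc, relTT hT, smul_smul]; try congr 1; try ring⟩
        · constructor
          · exact Or.inr (Or.inr (Or.inr (Or.inr ⟨m, 0, 0,
              by rw [mul_smul_comm, hadj]; try congr 1; try ring⟩)))
          · exact Or.inr (Or.inr (Or.inr (Or.inl ⟨m, 0, 0,
              by rw [smul_mul_assoc, hadj]; try congr 1; try ring⟩)))
        · constructor
          · exact Or.inr (Or.inl ⟨m+1, n, l,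
              by rw [mul_smul_comm, relTT hT, smul_smul]; try congr 1; try ring⟩)
          · exact Or.inr (Or.inl ⟨m+1, n, l,
              by rw [smul_mul_assoc, relTT hT, smul_smul]; try congr 1; try ring⟩)
        · constructor
          · exact Or.inr (Or.inr (Or.inr (Or.inr ⟨m, n, l+1, by rw [mul_smul_comm, hadj]⟩)))
          · exact Or.inr (Or.inr (Or.inr (Or.inl ⟨m, n, l+1, by rw [smul_mul_assoc, hadj]⟩)))
        · constructor
          · exact Or.inr (Or.inr (Or.inr (Or.inl ⟨m, n, l+1, by rw [mul_smul_comm]⟩)))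
          · exact Or.inr (Or.inr (Or.inr (Or.inr ⟨m, n, l+1, by rw [smul_mul_assoc]⟩)))
        · constructor
          · exact Or.inr (Or.inr (Or.inl ⟨m, n+1, l,
              by rw [mul_smul_comm, hadj, relAA hA, smul_smul]; try congr 1; try ring⟩))
          · exact Or.inr (Or.inr (Or.inl ⟨m, n+1, l,
              by rw [smul_mul_assoc, hadj, relAA hA, smul_smul]; try congr 1; try ring⟩))
        · constructor
          · exact Or.inr (Or.inr (Or.inr (Or.inl ⟨m+1, n, l,
              by rw [mul_smul_comm, tTP hT hA hf1, smul_smul]; try congr 1; try ring⟩)))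
          · exact Or.inr (Or.inl ⟨m, n, l,
              by rw [smul_mul_assoc, relTAT hT hA hf1, smul_smul]; try congr 1; try ring⟩)
        · constructor
          · exact Or.inr (Or.inr (Or.inl ⟨m, n, l,
              by rw [mul_smul_comm, hadj, tAP hT hA hf1, smul_smul]; try congr 1; try ring⟩))
          · exact Or.inr (Or.inr (Or.inr (Or.inl ⟨m, n+1, l,
              by rw [smul_mul_assoc, hadj, tPA hT hA hf1, smul_smul]; try congr 1; try ring⟩)))
        · constructor
          · exact Or.inr (Or.inl ⟨m, n, l,
              by rw [mul_smul_comm, tTQ hT hA hf1, smul_smul]; try congr 1; try ring⟩)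
          · exact Or.inr (Or.inr (Or.inr (Or.inr ⟨m+1, n, l,
              by rw [smul_mul_assoc, tQT hT hA hf1, smul_smul]; try congr 1; try ring⟩)))
        · constructor
          · exact Or.inr (Or.inr (Or.inr (Or.inr ⟨m, n+1, l,
              by rw [mul_smul_comm, hadj, tAQ hT hA hf1, smul_smul]; try congr 1; try ring⟩)))
          · exact Or.inr (Or.inr (Or.inl ⟨m, n, l,
              by rw [smul_mul_assoc, hadj, relATA hT hA hf1, smul_smul]; try congr 1; try ring⟩))
      · rintro x y hx hy ihx ihy W hW
        refine ⟨?_, ?_⟩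
        · rw [mul_assoc]; exact (ihx _ ((ihy W hW).1)).1
        · rw [← mul_assoc]; exact (ihy _ ((ihx W hW).2)).2
    have hideal : IsSemigroupIdeal (genSG T) J₁ := ⟨hJsub, fun W hW X hX => hstep X hX W hW⟩
    have hTJ : T ∈ J₁ := (hJ₁mem T).2 (Or.inl ⟨0, by rw [pow_zero, one_smul]⟩)
    have hAJ : A ∈ J₁ := by have := hSI J₁ hideal T hTJ; rwa [hadj] at this
    rcases (hJ₁mem A).1 hAJ with ⟨m, hA1⟩ | ⟨m, n, l, hA1⟩ | ⟨m, n, l, hA1⟩ |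
      ⟨m, n, l, hA1⟩ | ⟨m, n, l, hA1⟩
    · exact absurd hA1 (exclT hT hA hf1 hns _)
    · exact absurd hA1 (exclT hT hA hf1 hns _)
    · -- main case
      have h2 := congrArg (fun X : H →L[ℂ] H => X f) hA1
      simp only [smul_apply, hAf] at h2
      have hs : (1:ℂ) = ⟪e,f⟫^m*⟪f,e⟫^n*⟪e,e⟫^(l+1) :=
        aux_smul_cancel he0 (by rw [one_smul]; exact h2)
      by_cases hmn : 1 ≤ m + n
      · have ha : ∃ m' n' l' : ℕ, 1 ≤ m' + n' ∧ 1 ≤ l' ∧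
            ⟪f, T f⟫ ^ m' * (starRingEnd ℂ) ⟪f, T f⟫ ^ n' * (‖T‖ : ℂ) ^ (2 * l') = 1 := by
          refine ⟨m, n, l+1, hmn, by omega, ?_⟩
          rw [hτ, hσ'c, pow_mul, hε]
          exact hs.symm
        exact Or.inl ⟨ha, fun hb => hnotboth ⟨ha, hb⟩⟩
      · have hm0 : m = 0 := by omega
        have hn0 : n = 0 := by omega
        subst hm0; subst hn0
        rw [pow_zero, pow_zero, one_mul, one_mul] at hs
        have hT1 : ‖T‖ = 1 := by
          have h3 : ((‖T‖:ℝ):ℂ)^(2*(l+1)) = 1 := by rw [pow_mul, hε]; exact hs.symm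
          have h4 := congrArg (‖·‖) h3
          simp only [norm_pow, Complex.norm_real, Real.norm_eq_abs,
            abs_of_nonneg (norm_nonneg T), norm_one] at h4
          exact pow_eq_one_nonneg (norm_nonneg _) (by omega) h4
        have hε1 : ⟪e,e⟫ = (1:ℂ) := by rw [← hε, hT1]; norm_num
        set J₂ : Set (H →L[ℂ] H) := {W | ∃ V ∈ J₁, W = ⟪e,f⟫ • V} with hJ₂_def
        have hJ₂mem : ∀ W, W ∈ J₂ ↔ ∃ V ∈ J₁, W = ⟪e,f⟫ • V := by
          intro W; rw [hJ₂_def]; exact Iff.rfl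
        have hJ₂sub : J₂ ⊆ genSG T := by
          intro W hW
          obtain ⟨V, hV, rfl⟩ := (hJ₂mem W).1 hW
          rcases (hJ₁mem V).1 hV with ⟨m, rfl⟩ | ⟨m, n, l', rfl⟩ | ⟨m, n, l', rfl⟩ |
            ⟨m, n, l', rfl⟩ | ⟨m, n, l', rfl⟩
          · rw [smul_smul, show ⟪e,f⟫*⟪e,f⟫^m = ⟪e,f⟫^(m+1) by ring]
            exact memL1 hT hA hf1 hadj (m+1)
          · rw [smul_smul, show ⟪e,f⟫*(⟪e,f⟫^m*⟪f,e⟫^n*⟪e,e⟫^(l'+1)) =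
              ⟪e,f⟫^(m+1)*⟪f,e⟫^n*⟪e,e⟫^(l'+1) by ring]
            exact memL3 hT hA hf1 hadj (m+1) n l'
          · rw [smul_smul, show ⟪e,f⟫*(⟪e,f⟫^m*⟪f,e⟫^n*⟪e,e⟫^(l'+1)) =
              ⟪e,f⟫^(m+1)*⟪f,e⟫^n*⟪e,e⟫^(l'+1) by ring]
            exact memL4 hT hA hf1 hadj (m+1) n l'
          · rw [smul_smul, show ⟪e,f⟫*(⟪e,f⟫^m*⟪f,e⟫^n*⟪e,e⟫^l') =
              ⟪e,f⟫^(m+1)*⟪f,e⟫^n*⟪e,e⟫^l' by ring]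
            exact memL5 hT hA hf1 hadj (m+1) n l'
          · rw [smul_smul, show ⟪e,f⟫*(⟪e,f⟫^m*⟪f,e⟫^n*⟪e,e⟫^l') =
              ⟪e,f⟫^(m+1)*⟪f,e⟫^n*⟪e,e⟫^l' by ring]
            exact memL6 hT hA hf1 hadj (m+1) n l'
        have hJ₂ideal : IsSemigroupIdeal (genSG T) J₂ := by
          refine ⟨hJ₂sub, ?_⟩
          intro W hW X hX
          obtain ⟨V, hV, rfl⟩ := (hJ₂mem W).1 hW
          constructor
          · exact (hJ₂mem _).2 ⟨X*V, (hstep X hX V hV).1, mul_smul_comm _ _ _⟩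
          · exact (hJ₂mem _).2 ⟨V*X, (hstep X hX V hV).2, smul_mul_assoc _ _ _⟩
        have hTTJ₂ : T*T ∈ J₂ := (hJ₂mem _).2 ⟨T, hTJ, relTT hT⟩
        have hadj2 := hSI J₂ hJ₂ideal (T*T) hTTJ₂
        have hadjTT : adjoint (T*T) = (⟪f,e⟫)•A := by
          rw [← star_eq_adjoint, star_mul, star_eq_adjoint, hadj, relAA hA]
        rw [hadjTT] at hadj2
        obtain ⟨V, hV, hVeq⟩ := (hJ₂mem _).1 hadj2
        have hσ'0 : ⟪f,e⟫ ≠ (0:ℂ) := by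
          rw [← hσ'c, starRingEnd_apply]; exact star_ne_zero.2 hσ0
        have hdiv : ∀ (d : ℂ) (B : H →L[ℂ] H), ⟪f,e⟫•A = d•B → A = ((⟪f,e⟫)⁻¹*d)•B := by
          intro d B h
          calc A = (⟪f,e⟫)⁻¹•(⟪f,e⟫•A) := (inv_smul_smul₀ hσ'0 A).symm
            _ = (⟪f,e⟫)⁻¹•(d•B) := by rw [h]
            _ = ((⟪f,e⟫)⁻¹*d)•B := smul_smul _ _ _
        rcases (hJ₁mem V).1 hV with ⟨m, rfl⟩ | ⟨m, n, l', rfl⟩ | ⟨m, n, l', rfl⟩ |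
          ⟨m, n, l', rfl⟩ | ⟨m, n, l', rfl⟩ <;> rw [smul_smul] at hVeq
        · exact absurd (hdiv _ _ hVeq) (exclT hT hA hf1 hns _)
        · exact absurd (hdiv _ _ hVeq) (exclT hT hA hf1 hns _)
        · -- A-type: extract scalar relation
          have h6 := congrArg (fun X : H →L[ℂ] H => X f) hVeq
          simp only [smul_apply, hAf] at h6
          have h7 : ⟪f,e⟫ = ⟪e,f⟫*(⟪e,f⟫^m*⟪f,e⟫^n*⟪e,e⟫^(l'+1)) := aux_smul_cancel he0 h6
          rw [hε1, one_pow, mul_one] at h7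
          have hnσ' : ‖(⟪f,e⟫:ℂ)‖ = ‖(⟪e,f⟫:ℂ)‖ := by rw [← hσ'c, RCLike.norm_conj]
          have hρpos : 0 < ‖(⟪e,f⟫:ℂ)‖ := norm_pos_iff.2 hσ0
          have hρ1 : ‖(⟪e,f⟫:ℂ)‖ < 1 := by
            calc ‖(⟪e,f⟫:ℂ)‖ < ‖e‖ := hρlt
              _ = 1 := by rw [← hnrm, hT1]
          have h8 := congrArg (‖·‖) h7
          simp only [norm_mul, norm_pow, hnσ'] at h8
          have hm0 : m = 0 ∧ n = 0 := by
            by_contra hcon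
            have h9 : ‖(⟪e,f⟫:ℂ)‖*(‖(⟪e,f⟫:ℂ)‖^m*‖(⟪e,f⟫:ℂ)‖^n) < ‖(⟪e,f⟫:ℂ)‖ := by
              rw [show ‖(⟪e,f⟫:ℂ)‖^m*‖(⟪e,f⟫:ℂ)‖^n = ‖(⟪e,f⟫:ℂ)‖^(m+n) from by rw [pow_add]]
              have h10 : ‖(⟪e,f⟫:ℂ)‖^(m+n) < 1 :=
                pow_lt_one₀ (le_of_lt hρpos) hρ1 (by omega)
              nlinarith
            rw [← h8] at h9
            exact lt_irrefl _ h9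
          obtain ⟨hm0', hn0'⟩ := hm0
          subst hm0'; subst hn0'
          rw [pow_zero, pow_zero, one_mul, mul_one] at h7
          have hb : (starRingEnd ℂ) ⟪f, T f⟫ = ⟪f, T f⟫ ∧ ‖T‖ = 1 := by
            refine ⟨?_, hT1⟩
            rw [hτ, hσ'c]
            exact h7
          exact Or.inr ⟨hb, fun ha => hnotboth ⟨ha, hb⟩⟩
        · exact absurd (hdiv _ _ hVeq) (exclP hT hA hf1 hns _)
        · exact absurd (hdiv _ _ hVeq) (exclQ hT hA hf1 he0 hf0 hns _)
    · exact absurd hA1 (exclP hT hA hf1 hns _)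
    · exact absurd hA1 (exclQ hT hA hf1 he0 hf0 hns _)
  · -- backward
    intro hxor J hJ W hW
    obtain ⟨hJsub, hJmul⟩ := hJ
    obtain ⟨a, b, c, hform⟩ := structure_lemma hT hA hf1 hadj W (hJsub hW)
    have hAS : A ∈ genSG T := genSG_A hT hA hf1 hadj
    have hTS : T ∈ genSG T := genSG_T
    have hadjA : adjoint A = T := by rw [← hadj]; exact adjoint_adjoint T
    have hadj_smul : ∀ (d : ℂ) (B : H →L[ℂ] H),
        adjoint (d•B) = (starRingEnd ℂ d)•(adjoint B) := by
      intro d B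
      rw [← star_eq_adjoint, star_smul, star_eq_adjoint, Complex.star_def]
    have hadjP : adjoint (T*A) = T*A := by
      rw [← star_eq_adjoint, star_mul, star_eq_adjoint, star_eq_adjoint, hadj, hadjA]
    have hadjQ : adjoint (A*T) = A*T := by
      rw [← star_eq_adjoint, star_mul, star_eq_adjoint, star_eq_adjoint, hadj, hadjA]
    have hconj_s : (starRingEnd ℂ) (⟪e,f⟫^a*⟪f,e⟫^b*⟪e,e⟫^c)
        = ⟪e,f⟫^b*⟪f,e⟫^a*⟪e,e⟫^c := by
      simp only [map_mul, map_pow, hσ'c, hσc, hεc]; ring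
    rcases hxor with ⟨⟨m, n, l, hmn, hl, heq⟩, _⟩ | ⟨⟨hreal, hT1⟩, _⟩
    · -- condition (a)
      rw [hτ, hσ'c, pow_mul, hε] at heq
      have hunitc : ⟪e,f⟫^n*⟪f,e⟫^m*⟪e,e⟫^l = 1 := by
        have h2 := congrArg (starRingEnd ℂ) heq
        simp only [map_mul, map_pow, hσ'c, hσc, hεc, map_one] at h2
        calc ⟪e,f⟫^n*⟪f,e⟫^m*⟪e,e⟫^l = ⟪f,e⟫^m*⟪e,f⟫^n*⟪e,e⟫^l := by ring
          _ = 1 := h2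
      set M := m + n with hM_def
      set k := a + b + 1 with hk_def
      have hkM : k ≤ k*M := by
        calc k = k*1 := (mul_one k).symm
          _ ≤ k*M := Nat.mul_le_mul_left k hmn
      obtain ⟨α₀, hα⟩ : ∃ α₀, a + (α₀+1) = b + k*M := ⟨b + k*M - a - 1, by omega⟩
      obtain ⟨β₀, hβ⟩ : ∃ β₀, b + (β₀+1) = a + k*M := ⟨a + k*M - b - 1, by omega⟩
      obtain ⟨g, hg⟩ : ∃ g, g + 2 = 2*k*l := by
        refine ⟨2*k*l - 2, ?_⟩
        have h1 : 1*1 ≤ k*l := Nat.mul_le_mul (by omega) hl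
        have h2 : 2*k*l = 2*(k*l) := by ring
        omega
      have hunit2 : ⟪e,f⟫^M*⟪f,e⟫^M*⟪e,e⟫^(2*l) = 1 := by
        calc ⟪e,f⟫^M*⟪f,e⟫^M*⟪e,e⟫^(2*l)
            = (⟪e,f⟫^m*⟪f,e⟫^n*⟪e,e⟫^l)*(⟪e,f⟫^n*⟪f,e⟫^m*⟪e,e⟫^l) := by
              rw [hM_def]; ring
          _ = 1 := by rw [heq, hunitc, mul_one]
      have hkey : (⟪e,f⟫^a*⟪f,e⟫^b*⟪e,e⟫^c) * (⟪e,f⟫^(α₀+1)*⟪f,e⟫^(β₀+1)*⟪e,e⟫^(g+2))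
          = ⟪e,f⟫^b*⟪f,e⟫^a*⟪e,e⟫^c := by
        have e1 : ⟪e,f⟫^a*⟪e,f⟫^(α₀+1) = ⟪e,f⟫^b*(⟪e,f⟫^M)^k := by
          rw [← pow_add, hα, pow_add, mul_comm k M, pow_mul]
        have e2 : ⟪f,e⟫^b*⟪f,e⟫^(β₀+1) = ⟪f,e⟫^a*(⟪f,e⟫^M)^k := by
          rw [← pow_add, hβ, pow_add, mul_comm k M, pow_mul]
        have e3 : (⟪e,e⟫:ℂ)^(g+2) = (⟪e,e⟫^(2*l))^k := by
          rw [← pow_mul]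
          congr 1
          rw [show 2*l*k = 2*k*l from by ring, ← hg]
        calc (⟪e,f⟫^a*⟪f,e⟫^b*⟪e,e⟫^c) * (⟪e,f⟫^(α₀+1)*⟪f,e⟫^(β₀+1)*⟪e,e⟫^(g+2))
            = (⟪e,f⟫^a*⟪e,f⟫^(α₀+1))*((⟪f,e⟫^b*⟪f,e⟫^(β₀+1))*(⟪e,e⟫^c*⟪e,e⟫^(g+2))) := by
              ring
          _ = (⟪e,f⟫^b*(⟪e,f⟫^M)^k)*((⟪f,e⟫^a*(⟪f,e⟫^M)^k)*(⟪e,e⟫^c*(⟪e,e⟫^(2*l))^k)) := by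
              rw [e1, e2, e3]
          _ = (⟪e,f⟫^b*⟪f,e⟫^a*⟪e,e⟫^c)*((⟪e,f⟫^M*⟪f,e⟫^M*⟪e,e⟫^(2*l))^k) := by
              rw [mul_pow, mul_pow]; ring
          _ = ⟪e,f⟫^b*⟪f,e⟫^a*⟪e,e⟫^c := by rw [hunit2, one_pow, mul_one]
      rcases hform with rfl | rfl | rfl | rfl
      · -- W = u•T
        have hXmem := memL4 hT hA hf1 hadj (α₀+1) (β₀+1) g
        have h1 := (hJmul _ hW _ hXmem).1
        have h2 := (hJmul _ h1 A hAS).2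
        have h3 : (((⟪e,f⟫^(α₀+1)*⟪f,e⟫^(β₀+1)*⟪e,e⟫^(g+1))•A)
            *((⟪e,f⟫^a*⟪f,e⟫^b*⟪e,e⟫^c)•T))*A
            = adjoint ((⟪e,f⟫^a*⟪f,e⟫^b*⟪e,e⟫^c)•T) := by
          rw [hadj_smul, hconj_s, hadj]
          rw [keyLR _ _ _ _ _ _ (one_smul ℂ (A*T)).symm, smul_mul_assoc,
            relATA hT hA hf1, smul_smul]
          congr 1
          calc (⟪e,f⟫^(α₀+1)*⟪f,e⟫^(β₀+1)*⟪e,e⟫^(g+1))*(⟪e,f⟫^a*⟪f,e⟫^b*⟪e,e⟫^c)*1*⟪e,e⟫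
              = (⟪e,f⟫^a*⟪f,e⟫^b*⟪e,e⟫^c)
                * (⟪e,f⟫^(α₀+1)*⟪f,e⟫^(β₀+1)*⟪e,e⟫^(g+2)) := by ring
            _ = ⟪e,f⟫^b*⟪f,e⟫^a*⟪e,e⟫^c := hkey
        rw [← h3]; exact h2
      · -- W = u•A
        have hXmem := memL3 hT hA hf1 hadj (α₀+1) (β₀+1) g
        have h1 := (hJmul _ hW _ hXmem).1
        have h2 := (hJmul _ h1 T hTS).2
        have h3 : (((⟪e,f⟫^(α₀+1)*⟪f,e⟫^(β₀+1)*⟪e,e⟫^(g+1))•T)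
            *((⟪e,f⟫^a*⟪f,e⟫^b*⟪e,e⟫^c)•A))*T
            = adjoint ((⟪e,f⟫^a*⟪f,e⟫^b*⟪e,e⟫^c)•A) := by
          rw [hadj_smul, hconj_s, hadjA]
          rw [keyLR _ _ _ _ _ _ (one_smul ℂ (T*A)).symm, smul_mul_assoc,
            relTAT hT hA hf1, smul_smul]
          congr 1
          calc (⟪e,f⟫^(α₀+1)*⟪f,e⟫^(β₀+1)*⟪e,e⟫^(g+1))*(⟪e,f⟫^a*⟪f,e⟫^b*⟪e,e⟫^c)*1*⟪e,e⟫
              = (⟪e,f⟫^a*⟪f,e⟫^b*⟪e,e⟫^c)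
                * (⟪e,f⟫^(α₀+1)*⟪f,e⟫^(β₀+1)*⟪e,e⟫^(g+2)) := by ring
            _ = ⟪e,f⟫^b*⟪f,e⟫^a*⟪e,e⟫^c := hkey
        rw [← h3]; exact h2
      · -- W = u•(T*A)
        have hXmem := memL3 hT hA hf1 hadj α₀ 0 (g+1)
        have hYmem := memL2 hT hA hf1 hadj β₀
        have h1 := (hJmul _ hW _ hXmem).1
        have h2 := (hJmul _ h1 _ hYmem).2
        have h3 : (((⟪e,f⟫^α₀*⟪f,e⟫^0*⟪e,e⟫^(g+1+1))•T)
            *((⟪e,f⟫^a*⟪f,e⟫^b*⟪e,e⟫^c)•(T*A)))*((⟪f,e⟫^β₀)•A)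
            = adjoint ((⟪e,f⟫^a*⟪f,e⟫^b*⟪e,e⟫^c)•(T*A)) := by
          rw [hadj_smul, hconj_s, hadjP]
          rw [keyLR _ _ _ _ _ _ (tTP hT hA hf1), keyLR _ _ _ _ _ _ (tPA hT hA hf1)]
          congr 1
          calc (⟪e,f⟫^α₀*⟪f,e⟫^0*⟪e,e⟫^(g+1+1))*(⟪e,f⟫^a*⟪f,e⟫^b*⟪e,e⟫^c)*⟪e,f⟫
                *(⟪f,e⟫^β₀)*⟪f,e⟫
              = (⟪e,f⟫^a*⟪f,e⟫^b*⟪e,e⟫^c)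
                * (⟪e,f⟫^(α₀+1)*⟪f,e⟫^(β₀+1)*⟪e,e⟫^(g+2)) := by ring
            _ = ⟪e,f⟫^b*⟪f,e⟫^a*⟪e,e⟫^c := hkey
        rw [← h3]; exact h2
      · -- W = u•(A*T)
        have hXmem := memL4 hT hA hf1 hadj 0 β₀ (g+1)
        have hYmem := memL1 hT hA hf1 hadj α₀
        have h1 := (hJmul _ hW _ hXmem).1
        have h2 := (hJmul _ h1 _ hYmem).2
        have h3 : (((⟪e,f⟫^0*⟪f,e⟫^β₀*⟪e,e⟫^(g+1+1))•A)
            *((⟪e,f⟫^a*⟪f,e⟫^b*⟪e,e⟫^c)•(A*T)))*((⟪e,f⟫^α₀)•T)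
            = adjoint ((⟪e,f⟫^a*⟪f,e⟫^b*⟪e,e⟫^c)•(A*T)) := by
          rw [hadj_smul, hconj_s, hadjQ]
          rw [keyLR _ _ _ _ _ _ (tAQ hT hA hf1), keyLR _ _ _ _ _ _ (tQT hT hA hf1)]
          congr 1
          calc (⟪e,f⟫^0*⟪f,e⟫^β₀*⟪e,e⟫^(g+1+1))*(⟪e,f⟫^a*⟪f,e⟫^b*⟪e,e⟫^c)*⟪f,e⟫
                *(⟪e,f⟫^α₀)*⟪e,f⟫
              = (⟪e,f⟫^a*⟪f,e⟫^b*⟪e,e⟫^c)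
                * (⟪e,f⟫^(α₀+1)*⟪f,e⟫^(β₀+1)*⟪e,e⟫^(g+2)) := by ring
            _ = ⟪e,f⟫^b*⟪f,e⟫^a*⟪e,e⟫^c := hkey
        rw [← h3]; exact h2
    · -- condition (b)
      have hσr : ⟪f,e⟫ = ⟪e,f⟫ := by
        rw [hτ] at hreal
        rw [← hσ'c]
        exact hreal
      have hε1 : ⟪e,e⟫ = (1:ℂ) := by rw [← hε, hT1]; norm_num
      rcases hform with rfl | rfl | rfl | rfl
      · have h1 := (hJmul _ hW A hAS).1
        have h2 := (hJmul _ h1 A hAS).2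
        have h3 : (A*((⟪e,f⟫^a*⟪f,e⟫^b*⟪e,e⟫^c)•T))*A
            = adjoint ((⟪e,f⟫^a*⟪f,e⟫^b*⟪e,e⟫^c)•T) := by
          rw [hadj_smul, hconj_s, hadj]
          rw [mul_smul_comm, smul_mul_assoc, relATA hT hA hf1, smul_smul]
          congr 1
          rw [hσr, hε1]; ring
        rw [← h3]; exact h2
      · have h1 := (hJmul _ hW T hTS).1
        have h2 := (hJmul _ h1 T hTS).2
        have h3 : (T*((⟪e,f⟫^a*⟪f,e⟫^b*⟪e,e⟫^c)•A))*T
            = adjoint ((⟪e,f⟫^a*⟪f,e⟫^b*⟪e,e⟫^c)•A) := by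
          rw [hadj_smul, hconj_s, hadjA]
          rw [mul_smul_comm, smul_mul_assoc, relTAT hT hA hf1, smul_smul]
          congr 1
          rw [hσr, hε1]; ring
        rw [← h3]; exact h2
      · have h3 : adjoint ((⟪e,f⟫^a*⟪f,e⟫^b*⟪e,e⟫^c)•(T*A))
            = (⟪e,f⟫^a*⟪f,e⟫^b*⟪e,e⟫^c)•(T*A) := by
          rw [hadj_smul, hconj_s, hadjP]
          congr 1
          rw [hσr]; ring
        rw [h3]; exact hW
      · have h3 : adjoint ((⟪e,f⟫^a*⟪f,e⟫^b*⟪e,e⟫^c)•(A*T))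
            = (⟪e,f⟫^a*⟪f,e⟫^b*⟪e,e⟫^c)•(A*T) := by
          rw [hadj_smul, hconj_s, hadjQ]
          congr 1
          rw [hσr]; ring
        rw [h3]; exact hW
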